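/- For any matrix Φ ∈ ℝ^{m×n}, the maximum abstract simplicial complex associated with Φ equals {S ⊆ U_n : ‖z_S‖₁ < 1/2 for every z ∈ Ext(null(Φ) ∩ B₁ⁿ)}, where Ext denotes the set of extreme points. -/

import Mathlib

/-- The ℓ₁ norm of a vector in ℝⁿ. -/
noncomputable def l1 {n : ℕ} (x : Fin n → ℝ) : ℝ := ∑ i, |x i|

/-- The ℓ₁ norm of the restriction of a vector to an index set `S`. -/
noncomputable def l1S {n : ℕ} (S : Finset (Fin n)) (x : Fin n → ℝ) : ℝ := ∑ i ∈ S, |x i|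

/-- The maximum abstract simplicial complex associated with `Φ`:
all index sets `S` with `‖η_S‖₁ < ‖η_{Sᶜ}‖₁` for every nonzero `η ∈ null(Φ)`. -/
def Tmax {m n : ℕ} (Φ : Matrix (Fin m) (Fin n) ℝ) : Set (Finset (Fin n)) :=
  {S | ∀ η : Fin n → ℝ, Φ.mulVec η = 0 → η ≠ 0 → l1S S η < l1S Sᶜ η}

lemma l1S_add_compl {n : ℕ} (S : Finset (Fin n)) (x : Fin n → ℝ) :
    l1S S x + l1S Sᶜ x = l1 x := by
  simp [l1S, l1, Finset.sum_add_sum_compl]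

lemma l1S_nonneg {n : ℕ} (S : Finset (Fin n)) (x : Fin n → ℝ) : 0 ≤ l1S S x :=
  Finset.sum_nonneg fun i _ => abs_nonneg _

lemma l1_pos {n : ℕ} {x : Fin n → ℝ} (hx : x ≠ 0) : 0 < l1 x := by
  rcases Function.ne_iff.1 hx with ⟨i, hi⟩
  have h1 : 0 < |x i| := abs_pos.2 hi
  have h2 : |x i| ≤ l1 x := Finset.single_le_sum (f := fun j => |x j|)
    (fun j _ => abs_nonneg _) (Finset.mem_univ i)
  linarith

lemma l1S_smul {n : ℕ} (S : Finset (Fin n)) (c : ℝ) (hc : 0 ≤ c) (x : Fin n → ℝ) :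
    l1S S (c • x) = c * l1S S x := by
  simp [l1S, Finset.mul_sum, abs_mul, abs_of_nonneg hc]

lemma convexOn_l1S {n : ℕ} (S : Finset (Fin n)) : ConvexOn ℝ Set.univ (l1S S) := by
  refine ⟨convex_univ, fun x _ y _ a b ha hb hab => ?_⟩
  simp only [l1S, smul_eq_mul]
  rw [Finset.mul_sum, Finset.mul_sum, ← Finset.sum_add_distrib]
  refine Finset.sum_le_sum fun i _ => ?_
  simp only [Pi.add_apply, Pi.smul_apply, smul_eq_mul]
  calc |a * x i + b * y i| ≤ |a * x i| + |b * y i| := abs_add_le _ _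
    _ = a * |x i| + b * |y i| := by rw [abs_mul, abs_mul, abs_of_nonneg ha, abs_of_nonneg hb]

lemma continuous_l1S {n : ℕ} (S : Finset (Fin n)) : Continuous (l1S S) :=
  continuous_finset_sum _ fun i _ => (continuous_apply i).abs

lemma continuous_l1 {n : ℕ} : Continuous (l1 (n := n)) :=
  continuous_finset_sum _ fun i _ => (continuous_apply i).abs

/-- A convex continuous function on a nonempty compact set attains its max at an extreme point. -/
lemma exists_extreme_max {n : ℕ} {K : Set (Fin n → ℝ)} (hK : IsCompact K) (hne : K.Nonempty)
    {f : (Fin n → ℝ) → ℝ} (hf : ConvexOn ℝ Set.univ f) (hcont : Continuous f) :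
    ∃ x ∈ Set.extremePoints ℝ K, ∀ z ∈ K, f z ≤ f x := by
  obtain ⟨x₀, hx₀K, hmax⟩ := hK.exists_isMaxOn hne hcont.continuousOn
  set M := f x₀ with hM
  set A := {x | x ∈ K ∧ f x = M} with hA
  have hAK : A ⊆ K := fun x hx => hx.1
  have hAext : IsExtreme ℝ K A := by
    refine ⟨hAK, fun x₁ hx₁ x₂ hx₂ x hx hseg => ?_⟩
    obtain ⟨a, b, ha, hb, hab, rfl⟩ := hseg
    have h1 : f x₁ ≤ M := hmax hx₁
    have h2 : f x₂ ≤ M := hmax hx₂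
    have h3 := hf.2 (Set.mem_univ x₁) (Set.mem_univ x₂) ha.le hb.le hab
    have h4 : f (a • x₁ + b • x₂) = M := hx.2
    simp only [smul_eq_mul] at h3
    have e1 : a * f x₁ ≤ a * M := mul_le_mul_of_nonneg_left h1 ha.le
    have e2 : b * f x₂ ≤ b * M := mul_le_mul_of_nonneg_left h2 hb.le
    have hm : a * M + b * M = M := by rw [← add_mul, hab, one_mul]
    have e3 : a * f x₁ = a * M := by linarith
    have e4 : b * f x₂ = b * M := by linarith
    exact ⟨hx₁, mul_left_cancel₀ ha.ne' e3⟩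
  have hAcl : IsClosed A := hK.isClosed.inter (isClosed_eq hcont continuous_const)
  have hAcomp : IsCompact A := hK.of_isClosed_subset hAcl hAK
  obtain ⟨x, hx⟩ := hAcomp.extremePoints_nonempty ⟨x₀, hx₀K, rfl⟩
  refine ⟨x, hAext.extremePoints_subset_extremePoints hx, fun z hz => ?_⟩
  have : f x = M := hx.1.2
  rw [this]
  exact hmax hz

/-- For any `Φ ∈ ℝ^{m×n}`, the maximum abstract simplicial complex associated with `Φ`
equals the collection of index sets `S` with `‖z_S‖₁ < 1/2` for every extreme point `z`
of `null(Φ) ∩ B₁ⁿ`. -/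
theorem stmt4 {m n : ℕ} (Φ : Matrix (Fin m) (Fin n) ℝ) :
    Tmax Φ = {S : Finset (Fin n) |
      ∀ z ∈ Set.extremePoints ℝ ({η : Fin n → ℝ | Φ.mulVec η = 0} ∩ {x | l1 x ≤ 1}),
        l1S S z < 1 / 2} := by
  set K : Set (Fin n → ℝ) := {η : Fin n → ℝ | Φ.mulVec η = 0} ∩ {x | l1 x ≤ 1} with hKdef
  ext S
  constructor
  · -- forward
    intro hS z hz
    obtain ⟨hzK, -⟩ := hz
    obtain ⟨hznull, hzball⟩ := hzK
    by_cases hz0 : z = 0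
    · subst hz0
      simp [l1S]
    · have h1 := hS z hznull hz0
      have h2 := l1S_add_compl S z
      have h3 : l1 z ≤ 1 := hzball
      linarith
  · -- backward
    intro hS η hηnull hη0
    have hKcl : IsClosed K := by
      refine IsClosed.inter ?_ (isClosed_le continuous_l1 continuous_const)
      have hcont : Continuous fun η : Fin n → ℝ => Φ.mulVec η := by
        refine continuous_pi fun i => ?_
        simp only [Matrix.mulVec, dotProduct]
        exact continuous_finset_sum _ fun j _ => continuous_const.mul (continuous_apply j)
      exact isClosed_eq hcont continuous_const
    have hKsub : K ⊆ Metric.closedBall 0 1 := by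
      intro x hx
      rw [Metric.mem_closedBall, dist_zero_right]
      rw [pi_norm_le_iff_of_nonneg zero_le_one]
      intro i
      have h2 : |x i| ≤ l1 x := Finset.single_le_sum (f := fun j => |x j|)
        (fun j _ => abs_nonneg _) (Finset.mem_univ i)
      calc ‖x i‖ = |x i| := rfl
        _ ≤ l1 x := h2
        _ ≤ 1 := hx.2
    have hKcomp : IsCompact K :=
      (isCompact_closedBall (0 : Fin n → ℝ) 1).of_isClosed_subset hKcl hKsub
    have hKne : K.Nonempty := by
      refine ⟨0, ?_, ?_⟩
      · simp [Matrix.mulVec_zero]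
      · simp [l1]
    obtain ⟨x, hxext, hxmax⟩ := exists_extreme_max hKcomp hKne (convexOn_l1S S)
      (continuous_l1S S)
    have hxlt : l1S S x < 1 / 2 := hS x hxext
    -- scale η into K
    set c := l1 η with hc
    have hcpos : 0 < c := l1_pos hη0
    have hzK : c⁻¹ • η ∈ K := by
      constructor
      · show Φ.mulVec (c⁻¹ • η) = 0
        rw [Matrix.mulVec_smul, hηnull, smul_zero]
      · show l1 (c⁻¹ • η) ≤ 1
        have : l1 (c⁻¹ • η) = c⁻¹ * l1 η := by
          simpa [l1S, l1, Finset.sum_congr] using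
            l1S_smul (Finset.univ : Finset (Fin n)) c⁻¹ (inv_nonneg.2 hcpos.le) η
        rw [this, ← hc, inv_mul_cancel₀ hcpos.ne']
    have hzS : l1S S (c⁻¹ • η) = c⁻¹ * l1S S η :=
      l1S_smul S c⁻¹ (inv_nonneg.2 hcpos.le) η
    have hlt : c⁻¹ * l1S S η < 1 / 2 := by
      rw [← hzS]
      exact lt_of_le_of_lt (hxmax _ hzK) hxlt
    have hsum := l1S_add_compl S η
    have h5 : l1S S η < c / 2 := by
      have := mul_lt_mul_of_pos_left hlt hcpos
      rw [← mul_assoc, mul_inv_cancel₀ hcpos.ne', one_mul] at this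
      linarith
    linarith
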